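/- For every real number t, Φ(t) = Φ(−t), where Φ(t) = Σ_{n=1}^{∞} (2π² n⁴ e^{9t/4} − 3π n² e^{5t/4}) e^{−π n² e^t}. -/

import Mathlib

open Real

/-- The Riemann xi kernel
`Φ(t) = ∑_{n=1}^{∞} (2π² n⁴ e^{9t/4} − 3π n² e^{5t/4}) e^{−π n² e^t}`. -/
noncomputable def Phi (t : ℝ) : ℝ :=
  ∑' n : ℕ,
    (2 * π ^ 2 * (n + 1 : ℝ) ^ 4 * exp (9 * t / 4)
      - 3 * π * (n + 1 : ℝ) ^ 2 * exp (5 * t / 4)) * exp (-π * (n + 1 : ℝ) ^ 2 * exp t)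

lemma summable_base {c : ℝ} (hc : 0 < c) : Summable fun n : ℤ => exp (-c * (n:ℝ)^2) := by
  have hr : exp (-c) < 1 := exp_lt_one_iff.mpr (by linarith)
  have hgeo : Summable fun n : ℤ => exp (-c) ^ n.natAbs := by
    apply Summable.of_nat_of_neg
    · simpa using summable_geometric_of_lt_one (exp_nonneg _) hr
    · simpa using summable_geometric_of_lt_one (exp_nonneg _) hr
  refine Summable.of_nonneg_of_le (fun n => exp_nonneg _) (fun n => ?_) hgeo
  rw [← Real.exp_nat_mul]
  apply exp_le_exp.mpr
  have h1 : (n.natAbs : ℝ) ≤ (n:ℝ)^2 := by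
    have h2 : ((n.natAbs : ℝ))^2 = (n:ℝ)^2 := by
      rw [Nat.cast_natAbs]; push_cast; rw [sq_abs]
    have h4 : n.natAbs ≤ n.natAbs^2 := Nat.le_self_pow two_ne_zero _
    have h5 : (n.natAbs : ℝ) ≤ ((n.natAbs:ℝ))^2 := by exact_mod_cast h4
    linarith
  nlinarith

lemma summable_sq {c : ℝ} (hc : 0 < c) :
    Summable fun n : ℤ => (n:ℝ)^2 * exp (-c * (n:ℝ)^2) := by
  refine Summable.of_nonneg_of_le (fun n => by positivity) (fun n => ?_)
    ((summable_base (c := c/2) (by linarith)).mul_left (2/c))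
  have key : (n:ℝ)^2 ≤ (2/c) * exp (c/2 * (n:ℝ)^2) := by
    have h := Real.add_one_le_exp (c/2 * (n:ℝ)^2)
    have hn : (0:ℝ) ≤ (n:ℝ)^2 := sq_nonneg _
    rw [div_mul_eq_mul_div, le_div_iff₀ hc]
    nlinarith
  calc (n:ℝ)^2 * exp (-c * (n:ℝ)^2)
      ≤ ((2/c) * exp (c/2 * (n:ℝ)^2)) * exp (-c * (n:ℝ)^2) := by
        exact mul_le_mul_of_nonneg_right key (exp_nonneg _)
    _ = 2/c * exp (-(c/2) * (n:ℝ)^2) := by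
        rw [mul_assoc, ← Real.exp_add]; ring_nf

lemma summable_quartic {c : ℝ} (hc : 0 < c) :
    Summable fun n : ℤ => (n:ℝ)^4 * exp (-c * (n:ℝ)^2) := by
  refine Summable.of_nonneg_of_le (fun n => by positivity) (fun n => ?_)
    ((summable_base (c := c/2) (by linarith)).mul_left (16/c^2))
  have key : (n:ℝ)^4 ≤ (16/c^2) * exp (c/2 * (n:ℝ)^2) := by
    have h := Real.add_one_le_exp (c/4 * (n:ℝ)^2)
    have hn : (0:ℝ) ≤ (n:ℝ)^2 := sq_nonneg _
    have h2 : (c/4 * (n:ℝ)^2)^2 ≤ exp (c/4 * (n:ℝ)^2)^2 := by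
      have h0 : 0 ≤ c/4 * (n:ℝ)^2 := by positivity
      nlinarith [exp_nonneg (c/4 * (n:ℝ)^2)]
    rw [← Real.exp_nat_mul] at h2
    norm_num at h2
    have h3 : exp (2 * (c/4 * (n:ℝ)^2)) = exp (c/2 * (n:ℝ)^2) := by ring_nf
    rw [div_mul_eq_mul_div, le_div_iff₀ (by positivity)]
    nlinarith [exp_nonneg (c/2 * (n:ℝ)^2), h2, h3]
  calc (n:ℝ)^4 * exp (-c * (n:ℝ)^2)
      ≤ ((16/c^2) * exp (c/2 * (n:ℝ)^2)) * exp (-c * (n:ℝ)^2) := by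
        exact mul_le_mul_of_nonneg_right key (exp_nonneg _)
    _ = 16/c^2 * exp (-(c/2) * (n:ℝ)^2) := by
        rw [mul_assoc, ← Real.exp_add]; ring_nf
noncomputable def g (n : ℤ) (t : ℝ) : ℝ := exp (t/4 - π * (n:ℝ)^2 * exp t)
noncomputable def g1 (n : ℤ) (t : ℝ) : ℝ := (1/4 - π * (n:ℝ)^2 * exp t) * g n t
noncomputable def g2 (n : ℤ) (t : ℝ) : ℝ :=
  (-(π * (n:ℝ)^2 * exp t)) * g n t + (1/4 - π * (n:ℝ)^2 * exp t) * g1 n t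

lemma hasDerivAt_inner (n : ℤ) (t : ℝ) :
    HasDerivAt (fun t => t/4 - π * (n:ℝ)^2 * exp t) (1/4 - π * (n:ℝ)^2 * exp t) t := by
  exact (((hasDerivAt_id t).div_const 4).sub ((Real.hasDerivAt_exp t).const_mul (π * (n:ℝ)^2))).congr_deriv (by ring)

lemma hasDerivAt_g (n : ℤ) (t : ℝ) : HasDerivAt (g n) (g1 n t) t := by
  have := (hasDerivAt_inner n t).exp
  rw [show g1 n t = exp (t/4 - π * (n:ℝ)^2 * exp t) * (1/4 - π * (n:ℝ)^2 * exp t) by rw [g1, g]; ring]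
  exact this

lemma hasDerivAt_g1 (n : ℤ) (t : ℝ) : HasDerivAt (g1 n) (g2 n t) t := by
  have h1 : HasDerivAt (fun t => 1/4 - π * (n:ℝ)^2 * exp t) (-(π * (n:ℝ)^2 * exp t)) t := by
    exact ((hasDerivAt_const t (1/4:ℝ)).sub ((Real.hasDerivAt_exp t).const_mul (π * (n:ℝ)^2))).congr_deriv (by ring)
  exact h1.mul (hasDerivAt_g n t)

lemma g_pos (n : ℤ) (t : ℝ) : 0 < g n t := exp_pos _

lemma g_bound {R : ℝ} (hR : 0 < R) (n : ℤ) {t : ℝ} (ht : t ∈ Set.Ioo (-R) R) :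
    g n t ≤ exp R * exp (-(π * exp (-R)) * (n:ℝ)^2) := by
  rw [g, ← Real.exp_add]
  apply exp_le_exp.mpr
  obtain ⟨h1, h2⟩ := ht
  have he : exp (-R) ≤ exp t := exp_le_exp.mpr (le_of_lt h1)
  have hn : (0:ℝ) ≤ (n:ℝ)^2 := sq_nonneg _
  have : π * (n:ℝ)^2 * exp (-R) ≤ π * (n:ℝ)^2 * exp t := by
    apply mul_le_mul_of_nonneg_left he (by positivity)
  have ht4 : t/4 ≤ R := by linarith
  nlinarith

lemma g1_bound {R : ℝ} (hR : 0 < R) (n : ℤ) {t : ℝ} (ht : t ∈ Set.Ioo (-R) R) :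
    ‖g1 n t‖ ≤ (1/4 + π * (n:ℝ)^2 * exp R) * (exp R * exp (-(π * exp (-R)) * (n:ℝ)^2)) := by
  rw [g1, norm_mul]
  apply mul_le_mul
  · rw [Real.norm_eq_abs, abs_le]
    have he : exp t ≤ exp R := exp_le_exp.mpr (le_of_lt ht.2)
    have hn : (0:ℝ) ≤ (n:ℝ)^2 := sq_nonneg _
    have hp : (0:ℝ) ≤ π * (n:ℝ)^2 * exp t := by positivity
    have : π * (n:ℝ)^2 * exp t ≤ π * (n:ℝ)^2 * exp R :=
      mul_le_mul_of_nonneg_left he (by positivity)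
    constructor <;> nlinarith
  · rw [Real.norm_eq_abs, abs_of_pos (g_pos n t)]; exact g_bound hR n ht
  · exact norm_nonneg _
  · positivity

lemma g2_bound {R : ℝ} (hR : 0 < R) (n : ℤ) {t : ℝ} (ht : t ∈ Set.Ioo (-R) R) :
    ‖g2 n t‖ ≤ ((π * (n:ℝ)^2 * exp R) + (1/4 + π * (n:ℝ)^2 * exp R)^2) *
      (exp R * exp (-(π * exp (-R)) * (n:ℝ)^2)) := by
  rw [g2]
  have hgb := g_bound hR n ht
  have hg1b := g1_bound hR n ht
  have he : exp t ≤ exp R := exp_le_exp.mpr (le_of_lt ht.2)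
  have hn : (0:ℝ) ≤ (n:ℝ)^2 := sq_nonneg _
  have hB : (0:ℝ) ≤ exp R * exp (-(π * exp (-R)) * (n:ℝ)^2) := by positivity
  have h1 : ‖(-(π * (n:ℝ)^2 * exp t)) * g n t‖ ≤
      (π * (n:ℝ)^2 * exp R) * (exp R * exp (-(π * exp (-R)) * (n:ℝ)^2)) := by
    rw [norm_mul, Real.norm_eq_abs, Real.norm_eq_abs, abs_neg,
      abs_of_nonneg (by positivity : (0:ℝ) ≤ π * (n:ℝ)^2 * exp t),
      abs_of_pos (g_pos n t)]
    apply mul_le_mul _ hgb (le_of_lt (g_pos n t)) (by positivity)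
    exact mul_le_mul_of_nonneg_left he (by positivity)
  have h2 : ‖(1/4 - π * (n:ℝ)^2 * exp t) * g1 n t‖ ≤
      (1/4 + π * (n:ℝ)^2 * exp R) *
        ((1/4 + π * (n:ℝ)^2 * exp R) * (exp R * exp (-(π * exp (-R)) * (n:ℝ)^2))) := by
    rw [norm_mul]
    apply mul_le_mul _ hg1b (norm_nonneg _) (by positivity)
    rw [Real.norm_eq_abs, abs_le]
    have hp : (0:ℝ) ≤ π * (n:ℝ)^2 * exp t := by positivity
    have : π * (n:ℝ)^2 * exp t ≤ π * (n:ℝ)^2 * exp R :=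
      mul_le_mul_of_nonneg_left he (by positivity)
    constructor <;> nlinarith
  calc ‖(-(π * (n:ℝ)^2 * exp t)) * g n t + (1/4 - π * (n:ℝ)^2 * exp t) * g1 n t‖
      ≤ ‖(-(π * (n:ℝ)^2 * exp t)) * g n t‖ + ‖(1/4 - π * (n:ℝ)^2 * exp t) * g1 n t‖ :=
        norm_add_le _ _
    _ ≤ _ := by refine le_trans (add_le_add h1 h2) (le_of_eq ?_); ring

noncomputable def G (t : ℝ) : ℝ := ∑' n : ℤ, g n t
noncomputable def G1 (t : ℝ) : ℝ := ∑' n : ℤ, g1 n t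
noncomputable def G2 (t : ℝ) : ℝ := ∑' n : ℤ, g2 n t

lemma summable_aux {c : ℝ} (hc : 0 < c) (a b d : ℝ) :
    Summable fun n : ℤ => (d + b*(n:ℝ)^2 + a*(n:ℝ)^4) * exp (-c * (n:ℝ)^2) := by
  have h := (((summable_base hc).mul_left d).add ((summable_sq hc).mul_left b)).add
    ((summable_quartic hc).mul_left a)
  exact h.congr (fun n => by ring)

lemma summable_g (t : ℝ) : Summable fun n : ℤ => g n t := by
  set R : ℝ := |t| + 1 with hR
  have hR0 : 0 < R := by positivity
  have ht : t ∈ Set.Ioo (-R) R := by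
    constructor <;> [linarith [neg_abs_le t]; linarith [le_abs_self t]]
  have hc : 0 < π * exp (-R) := by positivity
  refine Summable.of_nonneg_of_le (fun n => le_of_lt (g_pos n t)) (fun n => g_bound hR0 n ht)
    ((summable_base hc).mul_left (exp R))

lemma summable_g1 (t : ℝ) : Summable fun n : ℤ => g1 n t := by
  set R : ℝ := |t| + 1 with hR
  have hR0 : 0 < R := by positivity
  have ht : t ∈ Set.Ioo (-R) R := by
    constructor <;> [linarith [neg_abs_le t]; linarith [le_abs_self t]]
  have hc : 0 < π * exp (-R) := by positivity
  refine Summable.of_norm_bounded (((summable_aux hc 0 (π * exp R * exp R) (exp R / 4)).congr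
    (fun n => ?_))) (fun n => g1_bound hR0 n ht)
  ring

lemma summable_g2 (t : ℝ) : Summable fun n : ℤ => g2 n t := by
  set R : ℝ := |t| + 1 with hR
  have hR0 : 0 < R := by positivity
  have ht : t ∈ Set.Ioo (-R) R := by
    constructor <;> [linarith [neg_abs_le t]; linarith [le_abs_self t]]
  have hc : 0 < π * exp (-R) := by positivity
  refine Summable.of_norm_bounded (((summable_aux hc ((π * exp R)^2 * exp R)
    ((π * exp R + 2 * (1/4) * (π * exp R)) * exp R) ((1/16) * exp R)).congr
    (fun n => ?_))) (fun n => g2_bound hR0 n ht)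
  ring

lemma hasDerivAt_G (t : ℝ) : HasDerivAt G (G1 t) t := by
  set R : ℝ := |t| + 1 with hR
  have hR0 : 0 < R := by positivity
  have ht : t ∈ Set.Ioo (-R) R := by
    constructor <;> [linarith [neg_abs_le t]; linarith [le_abs_self t]]
  have hc : 0 < π * exp (-R) := by positivity
  have hu : Summable (fun n : ℤ =>
      (1/4 + π * (n:ℝ)^2 * exp R) * (exp R * exp (-(π * exp (-R)) * (n:ℝ)^2))) :=
    (summable_aux hc 0 (π * exp R * exp R) (exp R / 4)).congr (fun n => by ring)
  exact hasDerivAt_tsum_of_isPreconnected hu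
    isOpen_Ioo (isPreconnected_Ioo) (fun n y _ => hasDerivAt_g n y)
    (fun n y hy => g1_bound hR0 n hy)
    ht (summable_g t) ht

lemma hasDerivAt_G1 (t : ℝ) : HasDerivAt G1 (G2 t) t := by
  set R : ℝ := |t| + 1 with hR
  have hR0 : 0 < R := by positivity
  have ht : t ∈ Set.Ioo (-R) R := by
    constructor <;> [linarith [neg_abs_le t]; linarith [le_abs_self t]]
  have hc : 0 < π * exp (-R) := by positivity
  have hu : Summable (fun n : ℤ =>
      ((π * (n:ℝ)^2 * exp R) + (1/4 + π * (n:ℝ)^2 * exp R)^2) *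
        (exp R * exp (-(π * exp (-R)) * (n:ℝ)^2))) :=
    (summable_aux hc ((π * exp R)^2 * exp R)
      ((π * exp R + 2 * (1/4) * (π * exp R)) * exp R) ((1/16) * exp R)).congr (fun n => by ring)
  exact hasDerivAt_tsum_of_isPreconnected hu
    isOpen_Ioo (isPreconnected_Ioo) (fun n y _ => hasDerivAt_g1 n y)
    (fun n y hy => g2_bound hR0 n hy)
    ht (summable_g1 t) ht

lemma G_eq (t : ℝ) : G t = exp (t/4) * ∑' n : ℤ, exp (-π * exp t * (n:ℝ)^2) := by
  rw [G, ← tsum_mul_left]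
  congr 1; funext n
  rw [g, ← Real.exp_add]; ring_nf

lemma G_even (t : ℝ) : G (-t) = G t := by
  have h2 : (exp (-t) : ℝ) ^ ((1:ℝ)/2) = exp (-t/2) := by
    rw [rpow_def_of_pos (exp_pos _), log_exp]; ring_nf
  have h3 : ∀ n : ℤ, -π / exp (-t) * (n:ℝ)^2 = -π * exp t * (n:ℝ)^2 := by
    intro n; rw [Real.exp_neg, div_eq_mul_inv, inv_inv]
  have key : ∑' n : ℤ, exp (-π * exp (-t) * (n:ℝ)^2)
      = exp (t/2) * ∑' n : ℤ, exp (-π * exp t * (n:ℝ)^2) := by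
    rw [Real.tsum_exp_neg_mul_int_sq (exp_pos (-t)), h2]
    rw [tsum_congr (fun n => by rw [h3 n])]
    congr 1
    rw [one_div, ← Real.exp_neg]; ring_nf
  rw [G_eq, G_eq, key, ← mul_assoc, ← Real.exp_add]
  congr 1
  ring

lemma G1_odd (t : ℝ) : G1 (-t) = - G1 t := by
  have hEq : G = fun y => G (-y) := funext fun y => (G_even y).symm
  have h1 : HasDerivAt (fun y => G (-y)) (G1 (-t) * (-1)) t :=
    (hasDerivAt_G (-t)).comp t (hasDerivAt_neg t)
  rw [← hEq] at h1
  have := (hasDerivAt_G t).unique h1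
  linarith

lemma G2_even (t : ℝ) : G2 (-t) = G2 t := by
  have hEq : G1 = fun y => -G1 (-y) := funext fun y => by rw [G1_odd, neg_neg]
  have h1 : HasDerivAt (fun y => -G1 (-y)) (-(G2 (-t) * (-1))) t :=
    ((hasDerivAt_G1 (-t)).comp t (hasDerivAt_neg t)).neg
  rw [← hEq] at h1
  have := (hasDerivAt_G1 t).unique h1
  linarith

lemma phi_eq (n : ℤ) (t : ℝ) : 2 * g2 n t - g n t / 8
    = (2 * π^2 * (n:ℝ)^4 * exp (9*t/4) - 3*π*(n:ℝ)^2 * exp (5*t/4))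
        * exp (-π * (n:ℝ)^2 * exp t) := by
  rw [g2, g1, g]
  have hsplit : exp (t/4 - π * (n:ℝ)^2 * exp t)
      = exp (t/4) * exp (-π*(n:ℝ)^2*exp t) := by rw [← Real.exp_add]; ring_nf
  have e9 : exp (9*t/4) = exp t * exp t * exp (t/4) := by
    rw [← Real.exp_add, ← Real.exp_add]; ring_nf
  have e5 : exp (5*t/4) = exp t * exp (t/4) := by rw [← Real.exp_add]; ring_nf
  rw [hsplit, e9, e5]; ring

lemma Phi_eq (t : ℝ) : Phi t = G2 t - G t / 16 := by
  set f : ℤ → ℝ := fun n => 2 * g2 n t - g n t / 8 with hfdef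
  have hf : Summable f := ((summable_g2 t).mul_left 2).sub ((summable_g t).div_const 8)
  have hplus : Summable (fun n : ℕ => f ((n:ℤ)+1)) :=
    hf.comp_injective (fun a b hab => by omega)
  have hminus : Summable (fun n : ℕ => f (-((n:ℤ)+1))) :=
    hf.comp_injective (fun a b hab => by omega)
  have hsum : ∑' n : ℤ, f n = (∑' n : ℕ, f ((n:ℤ)+1)) + f 0 + ∑' n : ℕ, f (-((n:ℤ)+1)) :=
    tsum_of_add_one_of_neg_add_one hplus hminus
  have f_neg : ∀ k : ℤ, f (-k) = f k := by
    intro k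
    have h1 : ((-k : ℤ) : ℝ)^2 = ((k:ℤ):ℝ)^2 := by push_cast; ring
    simp only [hfdef, g, g1, g2, h1]
  have f0 : f 0 = 0 := by simp [hfdef, g, g1, g2]; ring_nf
  have hPhi : Phi t = ∑' n : ℕ, f ((n:ℤ)+1) := by
    rw [Phi]
    refine tsum_congr fun n => ?_
    show _ = 2 * g2 ((n:ℤ)+1) t - g ((n:ℤ)+1) t / 8
    rw [phi_eq ((n:ℤ)+1) t]
    push_cast
    ring_nf
  have hlin : ∑' n : ℤ, f n = 2 * G2 t - G t / 8 := by
    rw [hfdef]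
    rw [Summable.tsum_sub ((summable_g2 t).mul_left 2) ((summable_g t).div_const 8),
      tsum_mul_left, tsum_div_const]
    rfl
  have hmirror : (∑' n : ℕ, f (-((n:ℤ)+1))) = ∑' n : ℕ, f ((n:ℤ)+1) :=
    tsum_congr fun n => f_neg _
  rw [hmirror, f0] at hsum
  rw [hPhi]
  linarith [hsum, hlin]

/-- The Riemann xi kernel is even: `Φ(t) = Φ(−t)` for every real `t`. -/
theorem Phi_even (t : ℝ) : Phi t = Phi (-t) := by
  rw [Phi_eq, Phi_eq, G2_even, G_even]
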